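/- Let (V, ω) be a complex symplectic vector space of dimension 2n and let α, β, γ be Lagrangian subspaces of V. Then dim(α ∩ β) + dim(α ∩ γ) + dim(β ∩ γ) ≤ n + 2·dim(α ∩ β ∩ γ), and equality holds if and only if α ∩ β + α ∩ γ = α ∩ (β + γ). -/

import Mathlib

open Module Submodule

/-- The annihilator of a subspace `lam` with respect to a sesquilinear form `ω`
(linear in the first variable, conjugate-linear in the second). -/
def symplAnn {V : Type*} [AddCommGroup V] [Module ℂ V]
    (ω : V →ₗ[ℂ] V →ₗ⋆[ℂ] ℂ) (lam : Submodule ℂ V) : Submodule ℂ V where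
  carrier := {x | ∀ y ∈ lam, ω x y = 0}
  add_mem' := by
    intro a b ha hb y hy
    simp [ha y hy, hb y hy]
  zero_mem' := by
    intro y hy
    simp
  smul_mem' := by
    intro c x hx y hy
    simp [hx y hy]

section aux

variable {V : Type*} [AddCommGroup V] [Module ℂ V]
variable (ω : V →ₗ[ℂ] V →ₗ⋆[ℂ] ℂ)

lemma mem_symplAnn {x : V} {lam : Submodule ℂ V} :
    x ∈ symplAnn ω lam ↔ ∀ y ∈ lam, ω x y = 0 := Iff.rfl

/-- The real part of `ω` as a real bilinear form. -/
noncomputable def reForm : LinearMap.BilinForm ℝ V :=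
  LinearMap.mk₂ ℝ (fun x y => (ω x y).re)
    (by intro x x' y; simp)
    (by intro r x y; rw [← Complex.coe_smul]; simp)
    (by intro x y y'; simp)
    (by intro r x y
        rw [← Complex.coe_smul]
        show ((ω x) ((r:ℂ) • y)).re = r • ((ω x) y).re
        rw [LinearMap.map_smulₛₗ]
        simp [Complex.conj_ofReal])

@[simp] lemma reForm_apply (x y : V) : reForm ω x y = (ω x y).re := rfl

variable (hSkew : ∀ x y : V, ω y x = -(starRingEnd ℂ) (ω x y))
variable (hNd : ∀ x : V, (∀ y : V, ω x y = 0) → x = 0)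

include hSkew in
lemma reForm_isRefl : (reForm ω).IsRefl := by
  intro x y h
  simp only [reForm_apply] at h ⊢
  rw [hSkew]
  simp [h]

include hSkew hNd in
lemma reForm_nondeg : (reForm ω).Nondegenerate := by
  refine (LinearMap.IsRefl.nondegenerate_iff_separatingLeft (reForm_isRefl ω hSkew)).2 ?_
  intro x h
  refine hNd x fun y => ?_
  have h1 : ((ω x) y).re = 0 := h y
  have h2 := h (Complex.I • y)
  rw [reForm_apply, LinearMap.map_smulₛₗ] at h2
  have him : ((ω x) y).im = 0 := by
    simpa [Complex.conj_I, Complex.mul_re] using h2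
  exact Complex.ext h1 him

include hSkew in
lemma orthogonal_symplAnn (lam : Submodule ℂ V) :
    (reForm ω).orthogonal (lam.restrictScalars ℝ) = (symplAnn ω lam).restrictScalars ℝ := by
  ext x
  simp only [LinearMap.BilinForm.mem_orthogonal_iff, Submodule.restrictScalars_mem,
    mem_symplAnn, LinearMap.BilinForm.IsOrtho, reForm_apply]
  constructor
  · intro h y hy
    have h1 := h y hy
    have h2 := h (Complex.I • y) (lam.smul_mem _ hy)
    have e : ω (Complex.I • y) x = Complex.I * ω y x := by
      rw [map_smul]; rfl
    rw [e] at h2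
    have hyx : ω y x = 0 := by
      apply Complex.ext
      · simpa using h1
      · simp only [Complex.mul_re, Complex.I_re, Complex.I_im] at h2; simpa using h2
    rw [hSkew y x, hyx]; simp
  · intro h y hy
    rw [hSkew x y, h y hy]
    simp

variable [FiniteDimensional ℂ V]

include hSkew hNd in
lemma finrank_symplAnn (lam : Submodule ℂ V) :
    finrank ℂ (symplAnn ω lam) + finrank ℂ lam = finrank ℂ V := by
  have h := LinearMap.BilinForm.finrank_orthogonal (reForm_nondeg ω hSkew hNd)
    (lam.restrictScalars ℝ)
  rw [orthogonal_symplAnn ω hSkew] at h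
  have e1 : finrank ℝ ((symplAnn ω lam).restrictScalars ℝ) = finrank ℝ (symplAnn ω lam) :=
    ((Submodule.restrictScalarsEquiv ℝ ℂ V (symplAnn ω lam)).restrictScalars ℝ).finrank_eq
  have e2 : finrank ℝ (lam.restrictScalars ℝ) = finrank ℝ lam :=
    ((Submodule.restrictScalarsEquiv ℝ ℂ V lam).restrictScalars ℝ).finrank_eq
  rw [e1, e2, finrank_real_of_complex, finrank_real_of_complex, finrank_real_of_complex] at h
  have hle : finrank ℂ lam ≤ finrank ℂ V := finrank_le lam
  omega

omit [FiniteDimensional ℂ V] in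
lemma symplAnn_sup (p q : Submodule ℂ V) :
    symplAnn ω (p ⊔ q) = symplAnn ω p ⊓ symplAnn ω q := by
  ext x
  simp only [Submodule.mem_inf, mem_symplAnn]
  constructor
  · intro h
    exact ⟨fun y hy => h y (le_sup_left (a := p) (b := q) hy),
      fun y hy => h y (le_sup_right (a := p) (b := q) hy)⟩
  · rintro ⟨h1, h2⟩ y hy
    obtain ⟨a, ha, b, hb, rfl⟩ := Submodule.mem_sup.1 hy
    simp [h1 a ha, h2 b hb]

end aux

theorem stmt9 {V : Type*} [AddCommGroup V] [Module ℂ V] [FiniteDimensional ℂ V]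
    (n : ℕ) (hdim : Module.finrank ℂ V = 2 * n)
    (ω : V →ₗ[ℂ] V →ₗ⋆[ℂ] ℂ)
    (hSkew : ∀ x y : V, ω y x = -(starRingEnd ℂ) (ω x y))
    (hNd : ∀ x : V, (∀ y : V, ω x y = 0) → x = 0)
    (α β γ : Submodule ℂ V)
    (hα : α = symplAnn ω α) (hβ : β = symplAnn ω β) (hγ : γ = symplAnn ω γ) :
    finrank ℂ (α ⊓ β : Submodule ℂ V) + finrank ℂ (α ⊓ γ : Submodule ℂ V) +
        finrank ℂ (β ⊓ γ : Submodule ℂ V) ≤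
      n + 2 * finrank ℂ (α ⊓ β ⊓ γ : Submodule ℂ V) ∧
    (finrank ℂ (α ⊓ β : Submodule ℂ V) + finrank ℂ (α ⊓ γ : Submodule ℂ V) +
        finrank ℂ (β ⊓ γ : Submodule ℂ V) =
      n + 2 * finrank ℂ (α ⊓ β ⊓ γ : Submodule ℂ V) ↔
      (α ⊓ β) ⊔ (α ⊓ γ) = α ⊓ (β ⊔ γ)) := by
  have hn : finrank ℂ α = n := by
    have h := finrank_symplAnn ω hSkew hNd α
    rw [← hα, hdim] at h
    omega
  have hbc : finrank ℂ (β ⊓ γ : Submodule ℂ V) + finrank ℂ (β ⊔ γ : Submodule ℂ V) = 2 * n := by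
    have h := finrank_symplAnn ω hSkew hNd (β ⊔ γ)
    rwa [symplAnn_sup, ← hβ, ← hγ, hdim] at h
  have habc : finrank ℂ (α ⊓ β ⊓ γ : Submodule ℂ V) +
      finrank ℂ (α ⊔ β ⊔ γ : Submodule ℂ V) = 2 * n := by
    have h := finrank_symplAnn ω hSkew hNd (α ⊔ β ⊔ γ)
    rwa [symplAnn_sup, symplAnn_sup, ← hα, ← hβ, ← hγ, hdim] at h
  have hsub : (α ⊓ β) ⊔ (α ⊓ γ) ≤ α ⊓ (β ⊔ γ) :=
    sup_le (inf_le_inf_left α le_sup_left) (inf_le_inf_left α le_sup_right)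
  have h1 : finrank ℂ ((α ⊓ β) ⊔ (α ⊓ γ) : Submodule ℂ V) +
      finrank ℂ (α ⊓ β ⊓ γ : Submodule ℂ V) =
      finrank ℂ (α ⊓ β : Submodule ℂ V) + finrank ℂ (α ⊓ γ : Submodule ℂ V) := by
    have h := Submodule.finrank_sup_add_finrank_inf_eq (α ⊓ β) (α ⊓ γ)
    rwa [show (α ⊓ β) ⊓ (α ⊓ γ) = α ⊓ β ⊓ γ by
      rw [← inf_inf_distrib_left, ← inf_assoc]] at h
  have h2 : finrank ℂ (α ⊔ β ⊔ γ : Submodule ℂ V) +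
      finrank ℂ (α ⊓ (β ⊔ γ) : Submodule ℂ V) =
      n + finrank ℂ (β ⊔ γ : Submodule ℂ V) := by
    have h := Submodule.finrank_sup_add_finrank_inf_eq α (β ⊔ γ)
    rwa [hn, ← sup_assoc] at h
  have hle : finrank ℂ ((α ⊓ β) ⊔ (α ⊓ γ) : Submodule ℂ V) ≤
      finrank ℂ (α ⊓ (β ⊔ γ) : Submodule ℂ V) := Submodule.finrank_mono hsub
  refine ⟨by omega, ⟨fun heq => ?_, fun heqset => ?_⟩⟩
  · exact Submodule.eq_of_le_of_finrank_le hsub (by omega)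
  · have : finrank ℂ ((α ⊓ β) ⊔ (α ⊓ γ) : Submodule ℂ V) =
        finrank ℂ (α ⊓ (β ⊔ γ) : Submodule ℂ V) := by rw [heqset]
    omega
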